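/- Let f = a₀ + ⋯ + aₙxⁿ, f₁ = b₀ + ⋯ + b_m x^m, f₂ = c₀ + ⋯ + c_{n−m} x^{n−m} be non-constant polynomials in ℤ[x] with f = f₁·f₂. Suppose there exist a prime p and positive integers k ≥ 2 and j ≤ n such that pᵏ divides each of a₀, a₁, …, a_{j−1}, p^{k+1} does not divide a₀, and gcd(k,j) = 1. If p divides b₀ and p divides c₀, then p divides aⱼ. -/

import Mathlib

private def pv (p : ℕ) (x : ℤ) : ℕ := padicValNat p x.natAbs

private lemma pv_dvd_iff (p : ℕ) (hp : p.Prime) (x : ℤ) (hx : x ≠ 0) (m : ℕ) :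
    (p:ℤ)^m ∣ x ↔ m ≤ pv p x := by
  haveI : Fact p.Prime := ⟨hp⟩
  rw [← Int.natAbs_dvd_natAbs]
  simp only [Int.natAbs_pow, Int.natAbs_natCast]
  exact padicValNat_dvd_iff_le (by simpa using hx)

private lemma pv_mul (p : ℕ) (hp : p.Prime) (x y : ℤ) (hx : x ≠ 0) (hy : y ≠ 0) :
    pv p (x*y) = pv p x + pv p y := by
  haveI : Fact p.Prime := ⟨hp⟩
  simp only [pv, Int.natAbs_mul]
  exact padicValNat.mul (by simpa using hx) (by simpa using hy)

private lemma npmin (p j k : ℕ) (g : Polynomial ℤ) (hg : g.coeff 0 ≠ 0) :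
    ∃ u, g.coeff u ≠ 0 ∧ ∀ i, g.coeff i ≠ 0 →
      (j * pv p (g.coeff u) + k * u ≤ j * pv p (g.coeff i) + k * i ∧
      (j * pv p (g.coeff i) + k * i ≤ j * pv p (g.coeff u) + k * u → i ≤ u)) := by
  classical
  have h0 : (0:ℕ) ∈ g.support := Polynomial.mem_support_iff.mpr hg
  have hne : (g.support.image (fun i => j * pv p (g.coeff i) + k * i)).Nonempty :=
    ⟨_, Finset.mem_image_of_mem _ h0⟩
  obtain ⟨u₀, hu₀s, hu₀⟩ := Finset.mem_image.mp (Finset.min'_mem _ hne)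
  have hAne : (g.support.filter (fun i => j * pv p (g.coeff i) + k * i =
      (g.support.image (fun i => j * pv p (g.coeff i) + k * i)).min' hne)).Nonempty :=
    ⟨u₀, Finset.mem_filter.mpr ⟨hu₀s, hu₀⟩⟩
  obtain ⟨u, humem, humax⟩ : ∃ u ∈ g.support.filter (fun i => j * pv p (g.coeff i) + k * i =
      (g.support.image (fun i => j * pv p (g.coeff i) + k * i)).min' hne),
      ∀ i ∈ g.support.filter (fun i => j * pv p (g.coeff i) + k * i =
      (g.support.image (fun i => j * pv p (g.coeff i) + k * i)).min' hne), i ≤ u :=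
    ⟨_, Finset.max'_mem _ hAne, fun i hi => Finset.le_max' _ i hi⟩
  rw [Finset.mem_filter] at humem
  refine ⟨u, Polynomial.mem_support_iff.mp humem.1, ?_⟩
  intro i hi
  have hWu := humem.2
  have hWi : (g.support.image (fun i => j * pv p (g.coeff i) + k * i)).min' hne
      ≤ j * pv p (g.coeff i) + k * i :=
    Finset.min'_le _ _ (Finset.mem_image_of_mem _ (Polynomial.mem_support_iff.mpr hi))
  constructor
  · rw [hWu]; exact hWi
  · intro hle
    rw [hWu] at hle
    have heq : j * pv p (g.coeff i) + k * i =
        (g.support.image (fun i => j * pv p (g.coeff i) + k * i)).min' hne :=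
      le_antisymm hle hWi
    exact humax i (Finset.mem_filter.mpr ⟨Polynomial.mem_support_iff.mpr hi, heq⟩)

theorem stmt3 (f f₁ f₂ : Polynomial ℤ)
    (hf₁ : 0 < f₁.natDegree) (hf₂ : 0 < f₂.natDegree)
    (hmul : f = f₁ * f₂)
    (p k j : ℕ) (hp : p.Prime) (hk : 2 ≤ k) (hj1 : 1 ≤ j) (hjn : j ≤ f.natDegree)
    (hdvd : ∀ i < j, (p : ℤ) ^ k ∣ f.coeff i)
    (hnd : ¬ (p : ℤ) ^ (k + 1) ∣ f.coeff 0)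
    (hgcd : Nat.gcd k j = 1)
    (hb0 : (p : ℤ) ∣ f₁.coeff 0) (hc0 : (p : ℤ) ∣ f₂.coeff 0) :
    (p : ℤ) ∣ f.coeff j := by
  by_contra hnj
  subst hmul
  -- coeff 0 facts
  have e0 : (f₁*f₂).coeff 0 = f₁.coeff 0 * f₂.coeff 0 := Polynomial.mul_coeff_zero _ _
  have ha0 : (f₁*f₂).coeff 0 ≠ 0 := by
    intro h; exact hnd (h ▸ dvd_zero _)
  have hb0' : f₁.coeff 0 ≠ 0 := by
    intro h; apply ha0; rw [e0, h, zero_mul]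
  have hc0' : f₂.coeff 0 ≠ 0 := by
    intro h; apply ha0; rw [e0, h, mul_zero]
  have hva0 : pv p ((f₁*f₂).coeff 0) = pv p (f₁.coeff 0) + pv p (f₂.coeff 0) := by
    rw [e0]; exact pv_mul p hp _ _ hb0' hc0'
  have hαβ : pv p (f₁.coeff 0) + pv p (f₂.coeff 0) = k := by
    have h1 : k ≤ pv p ((f₁*f₂).coeff 0) :=
      (pv_dvd_iff p hp _ ha0 k).mp (hdvd 0 (by omega))
    have h2 : ¬ (k + 1 ≤ pv p ((f₁*f₂).coeff 0)) :=
      fun h => hnd ((pv_dvd_iff p hp _ ha0 (k+1)).mpr h)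
    omega
  have hα1 : 1 ≤ pv p (f₁.coeff 0) := (pv_dvd_iff p hp _ hb0' 1).mp (by simpa using hb0)
  have hβ1 : 1 ≤ pv p (f₂.coeff 0) := (pv_dvd_iff p hp _ hc0' 1).mp (by simpa using hc0)
  -- minimizers
  obtain ⟨u, hbu, hmin₁⟩ := npmin p j k f₁ hb0'
  obtain ⟨w, hcw, hmin₂⟩ := npmin p j k f₂ hc0'
  have hM1 : j * pv p (f₁.coeff u) + k * u ≤ j * pv p (f₁.coeff 0) := by
    have := (hmin₁ 0 hb0').1; simpa using this
  have hM2 : j * pv p (f₂.coeff w) + k * w ≤ j * pv p (f₂.coeff 0) := by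
    have := (hmin₂ 0 hc0').1; simpa using this
  have hjj : j * pv p (f₁.coeff 0) + j * pv p (f₂.coeff 0) = j * k := by
    rw [← Nat.mul_add, hαβ]
  have hMsum : j * (pv p (f₁.coeff u) + pv p (f₂.coeff w)) + k * (u + w) ≤ j * k := by
    calc j * (pv p (f₁.coeff u) + pv p (f₂.coeff w)) + k * (u + w)
        = (j * pv p (f₁.coeff u) + k * u) + (j * pv p (f₂.coeff w) + k * w) := by ring
      _ ≤ j * pv p (f₁.coeff 0) + j * pv p (f₂.coeff 0) := add_le_add hM1 hM2
      _ = j * k := hjj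
  -- lower bound for any nonzero term
  have htermge : ∀ i₁ i₂ : ℕ, f₁.coeff i₁ ≠ 0 → f₂.coeff i₂ ≠ 0 →
      j * (pv p (f₁.coeff u) + pv p (f₂.coeff w)) + k * (u + w) ≤
      j * (pv p (f₁.coeff i₁) + pv p (f₂.coeff i₂)) + k * (i₁ + i₂) := by
    intro i₁ i₂ h1 h2
    have q1 := (hmin₁ i₁ h1).1
    have q2 := (hmin₂ i₂ h2).1
    calc j * (pv p (f₁.coeff u) + pv p (f₂.coeff w)) + k * (u + w)
        = (j * pv p (f₁.coeff u) + k * u) + (j * pv p (f₂.coeff w) + k * w) := by ring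
      _ ≤ (j * pv p (f₁.coeff i₁) + k * i₁) + (j * pv p (f₂.coeff i₂) + k * i₂) :=
          add_le_add q1 q2
      _ = j * (pv p (f₁.coeff i₁) + pv p (f₂.coeff i₂)) + k * (i₁ + i₂) := by ring
  -- strict bound for terms other than (u,w)
  have hterm : ∀ i₁ i₂ : ℕ, i₁ + i₂ = u + w → f₁.coeff i₁ ≠ 0 → f₂.coeff i₂ ≠ 0 →
      (i₁, i₂) ≠ (u, w) →
      pv p (f₁.coeff u) + pv p (f₂.coeff w) + 1 ≤ pv p (f₁.coeff i₁) + pv p (f₂.coeff i₂) := by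
    intro i₁ i₂ hsum h1 h2 hne2
    by_contra hlt
    push_neg at hlt
    have hle : pv p (f₁.coeff i₁) + pv p (f₂.coeff i₂) ≤
        pv p (f₁.coeff u) + pv p (f₂.coeff w) := by omega
    have q1 := hmin₁ i₁ h1
    have q2 := hmin₂ i₂ h2
    have hAB : (j * pv p (f₁.coeff i₁) + k * i₁) + (j * pv p (f₂.coeff i₂) + k * i₂)
        ≤ (j * pv p (f₁.coeff u) + k * u) + (j * pv p (f₂.coeff w) + k * w) := by
      have hm := Nat.mul_le_mul_left j hle
      calc (j * pv p (f₁.coeff i₁) + k * i₁) + (j * pv p (f₂.coeff i₂) + k * i₂)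
          = j * (pv p (f₁.coeff i₁) + pv p (f₂.coeff i₂)) + k * (i₁ + i₂) := by ring
        _ ≤ j * (pv p (f₁.coeff u) + pv p (f₂.coeff w)) + k * (u + w) := by
            rw [hsum]; exact Nat.add_le_add_right hm _
        _ = (j * pv p (f₁.coeff u) + k * u) + (j * pv p (f₂.coeff w) + k * w) := by ring
    have e1 : j * pv p (f₁.coeff i₁) + k * i₁ ≤ j * pv p (f₁.coeff u) + k * u := by
      have := q2.1; linarith
    have e2 : j * pv p (f₂.coeff i₂) + k * i₂ ≤ j * pv p (f₂.coeff w) + k * w := by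
      have := q1.1; linarith
    have hi1 : i₁ ≤ u := q1.2 e1
    have hi2 : i₂ ≤ w := q2.2 e2
    have hx1 : i₁ = u := by omega
    have hx2 : i₂ = w := by omega
    exact hne2 (by rw [hx1, hx2])
  -- valuation of coeff (u+w)
  have hBd : (p:ℤ)^(pv p (f₁.coeff u) + pv p (f₂.coeff w)) ∣ (f₁*f₂).coeff (u+w) := by
    rw [Polynomial.coeff_mul]
    apply Finset.dvd_sum
    intro x hx
    rcases eq_or_ne (f₁.coeff x.1 * f₂.coeff x.2) 0 with h | h
    · rw [h]; exact dvd_zero _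
    · have h1 : f₁.coeff x.1 ≠ 0 := left_ne_zero_of_mul h
      have h2 : f₂.coeff x.2 ≠ 0 := right_ne_zero_of_mul h
      rw [pv_dvd_iff p hp _ h, pv_mul p hp _ _ h1 h2]
      have hg := htermge x.1 x.2 h1 h2
      have hxs : x.1 + x.2 = u + w := Finset.HasAntidiagonal.mem_antidiagonal.mp hx
      rw [hxs] at hg
      have hg2 : j * (pv p (f₁.coeff u) + pv p (f₂.coeff w)) ≤
          j * (pv p (f₁.coeff x.1) + pv p (f₂.coeff x.2)) :=
        Nat.le_of_add_le_add_right hg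
      exact Nat.le_of_mul_le_mul_left hg2 (by omega)
  have hBnd : ¬ (p:ℤ)^(pv p (f₁.coeff u) + pv p (f₂.coeff w) + 1) ∣ (f₁*f₂).coeff (u+w) := by
    intro hdd
    rw [Polynomial.coeff_mul] at hdd
    have hmem : ((u,w) : ℕ × ℕ) ∈ Finset.HasAntidiagonal.antidiagonal (u+w) := Finset.HasAntidiagonal.mem_antidiagonal.mpr rfl
    rw [← Finset.add_sum_erase _ _ hmem] at hdd
    have hrest : (p:ℤ)^(pv p (f₁.coeff u) + pv p (f₂.coeff w) + 1) ∣
        ∑ x ∈ (Finset.HasAntidiagonal.antidiagonal (u+w)).erase (u,w), f₁.coeff x.1 * f₂.coeff x.2 := by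
      apply Finset.dvd_sum
      intro x hx
      rcases eq_or_ne (f₁.coeff x.1 * f₂.coeff x.2) 0 with h | h
      · rw [h]; exact dvd_zero _
      · have h1 : f₁.coeff x.1 ≠ 0 := left_ne_zero_of_mul h
        have h2 : f₂.coeff x.2 ≠ 0 := right_ne_zero_of_mul h
        have hxe := Finset.mem_erase.mp hx
        have hxs : x.1 + x.2 = u + w := Finset.HasAntidiagonal.mem_antidiagonal.mp hxe.2
        rw [pv_dvd_iff p hp _ h, pv_mul p hp _ _ h1 h2]
        refine hterm x.1 x.2 hxs h1 h2 ?_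
        intro hc; apply hxe.1; rw [← hc]
    have huw : (p:ℤ)^(pv p (f₁.coeff u) + pv p (f₂.coeff w) + 1) ∣
        f₁.coeff u * f₂.coeff w := by
      have := dvd_sub hdd hrest
      simpa using this
    have hne : f₁.coeff u * f₂.coeff w ≠ 0 := mul_ne_zero hbu hcw
    rw [pv_dvd_iff p hp _ hne, pv_mul p hp _ _ hbu hcw] at huw
    omega
  -- u + w ≤ j
  have hTj : u + w ≤ j := by
    have h1 : k * (u + w) ≤ j * k := le_trans (Nat.le_add_left _ _) hMsum
    rw [Nat.mul_comm j k] at h1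
    exact Nat.le_of_mul_le_mul_left h1 (by omega)
  rcases Nat.lt_or_ge (u + w) j with hlt | hge
  · rcases Nat.eq_zero_or_pos (u + w) with hT0 | hTpos
    · -- u = w = 0 : show p ∣ coeff j, contradiction
      have hu0 : u = 0 := by omega
      have hw0 : w = 0 := by omega
      apply hnj
      rw [Polynomial.coeff_mul]
      apply Finset.dvd_sum
      intro x hx
      rcases eq_or_ne (f₁.coeff x.1 * f₂.coeff x.2) 0 with h | h
      · rw [h]; exact dvd_zero _
      · have h1 : f₁.coeff x.1 ≠ 0 := left_ne_zero_of_mul h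
        have h2 : f₂.coeff x.2 ≠ 0 := right_ne_zero_of_mul h
        have hxs : x.1 + x.2 = j := Finset.HasAntidiagonal.mem_antidiagonal.mp hx
        have hp1 : (p:ℤ)^1 ∣ f₁.coeff x.1 * f₂.coeff x.2 := by
          rw [pv_dvd_iff p hp _ h, pv_mul p hp _ _ h1 h2]
          by_contra hz
          push_neg at hz
          have hz1 : pv p (f₁.coeff x.1) = 0 := by omega
          have hz2 : pv p (f₂.coeff x.2) = 0 := by omega
          have q1 := hmin₁ x.1 h1
          have q2 := hmin₂ x.2 h2
          rw [hu0] at q1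
          rw [hw0] at q2
          have a1 : j * pv p (f₁.coeff 0) ≤ k * x.1 := by
            have := q1.1; rw [hz1] at this; simpa using this
          have a2 : j * pv p (f₂.coeff 0) ≤ k * x.2 := by
            have := q2.1; rw [hz2] at this; simpa using this
          have hsum2 : k * x.1 + k * x.2 = k * j := by rw [← Nat.mul_add, hxs]
          have hjk : j * k = k * j := Nat.mul_comm j k
          have b1 : k * x.1 ≤ j * pv p (f₁.coeff 0) := by linarith
          have b2 : k * x.2 ≤ j * pv p (f₂.coeff 0) := by linarith
          have c1 : j * pv p (f₁.coeff x.1) + k * x.1 ≤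
              j * pv p (f₁.coeff 0) + k * 0 := by
            rw [hz1]; simpa using b1
          have c2 : j * pv p (f₂.coeff x.2) + k * x.2 ≤
              j * pv p (f₂.coeff 0) + k * 0 := by
            rw [hz2]; simpa using b2
          have hx1 : x.1 ≤ 0 := q1.2 c1
          have hx2 : x.2 ≤ 0 := q2.2 c2
          omega
        simpa using hp1
    · -- 0 < u+w < j
      have hav : (f₁*f₂).coeff (u+w) ≠ 0 := by
        intro h; exact hBnd (h ▸ dvd_zero _)
      have hkv : k ≤ pv p ((f₁*f₂).coeff (u+w)) :=
        (pv_dvd_iff p hp _ hav k).mp (hdvd _ hlt)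
      have hvS : pv p ((f₁*f₂).coeff (u+w)) ≤ pv p (f₁.coeff u) + pv p (f₂.coeff w) := by
        by_contra hcon
        push_neg at hcon
        exact hBnd ((pv_dvd_iff p hp _ hav _).mpr (by omega))
      have hkS : k ≤ pv p (f₁.coeff u) + pv p (f₂.coeff w) := le_trans hkv hvS
      have hmm : j * k ≤ j * (pv p (f₁.coeff u) + pv p (f₂.coeff w)) :=
        Nat.mul_le_mul_left j hkS
      have hz' : k * (u + w) ≤ 0 := by linarith
      have hz : k * (u + w) = 0 := Nat.le_zero.mp hz' 
      rcases Nat.mul_eq_zero.mp hz with h | h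
      · omega
      · omega
  · -- u + w = j
    have hTj' : u + w = j := le_antisymm hTj hge
    have haj : (f₁*f₂).coeff j ≠ 0 := by
      intro h; exact hnj (h ▸ dvd_zero _)
    rw [hTj'] at hBd
    have hS0 : pv p (f₁.coeff u) + pv p (f₂.coeff w) = 0 := by
      by_contra hcon
      have hd1 : (p:ℤ)^1 ∣ (f₁*f₂).coeff j := by
        rw [pv_dvd_iff p hp _ haj]
        have := (pv_dvd_iff p hp _ haj _).mp hBd
        omega
      exact hnj (by simpa using hd1)
    have hsb0 : pv p (f₁.coeff u) = 0 := by omega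
    have hsc0 : pv p (f₂.coeff w) = 0 := by omega
    rw [hsb0] at hM1
    rw [hsc0] at hM2
    simp only [Nat.mul_zero, Nat.zero_add] at hM1 hM2
    have hsum2 : k * u + k * w = k * j := by rw [← Nat.mul_add, hTj']
    have hjk : j * k = k * j := Nat.mul_comm j k
    have he1 : j * pv p (f₁.coeff 0) ≤ k * u := by linarith
    have he : k * u = j * pv p (f₁.coeff 0) := le_antisymm hM1 he1
    have hkdvd : k ∣ j * pv p (f₁.coeff 0) := ⟨u, he.symm⟩
    have hcop : Nat.Coprime k j := hgcd
    have hkα : k ∣ pv p (f₁.coeff 0) := hcop.dvd_of_dvd_mul_left hkdvd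
    have hfin : k ≤ pv p (f₁.coeff 0) := Nat.le_of_dvd (by omega) hkα
    omega
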